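/- Let a, b ∈ ℂ and consider the 3×3 complex matrices u = diag(i, i, -2i), v = [[0,0,a],[0,0,b],[-ā,-b̄,0]] (where ā, b̄ denote complex conjugates), and w := (1/3)·⁅u,v⁆. Then (1) w = [[0,0,ia],[0,0,ib],[iā,ib̄,0]], and (2) if ⁅v,w⁆ lies in the real linear span of {u, v, w} (i.e., ⁅v,w⁆ ∈ Span_ℝ{u,v,w}), then a = 0 and b = 0. -/
import Mathlib

set_option maxHeartbeats 1000000

open Matrix Complex

/-- For `a b : ℂ`, let `u = diag(i,i,-2i)`,
`v = [[0,0,a],[0,0,b],[-conj a, -conj b, 0]]` and `w = (1/3)⁅u,v⁆` in `su(3)`.  Then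
(1) `w = [[0,0,ia],[0,0,ib],[i conj a, i conj b, 0]]`, and (2) if `⁅v,w⁆` lies in the
real span of `{u, v, w}` then `a = 0` and `b = 0`. -/
theorem su3_no_A1_subalgebra_aux
    (a b : ℂ) (u v w : Matrix (Fin 3) (Fin 3) ℂ)
    (hu : u = !![I, 0, 0; 0, I, 0; 0, 0, -2 * I])
    (hv : v = !![0, 0, a; 0, 0, b; -(starRingEnd ℂ) a, -(starRingEnd ℂ) b, 0])
    (hw : w = (1 / 3 : ℂ) • ⁅u, v⁆) :
    w = !![0, 0, I * a; 0, 0, I * b; I * (starRingEnd ℂ) a, I * (starRingEnd ℂ) b, 0] ∧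
      (⁅v, w⁆ ∈ Submodule.span ℝ ({u, v, w} : Set (Matrix (Fin 3) (Fin 3) ℂ)) →
        a = 0 ∧ b = 0) := by
  subst hu hv hw
  have hw1 : (1 / 3 : ℂ) • ⁅!![I, 0, 0; 0, I, 0; 0, 0, -2 * I],
      !![0, 0, a; 0, 0, b; -(starRingEnd ℂ) a, -(starRingEnd ℂ) b, 0]⁆ =
      !![0, 0, I * a; 0, 0, I * b; I * (starRingEnd ℂ) a, I * (starRingEnd ℂ) b, 0] := by
    ext i j
    fin_cases i <;> fin_cases j <;>
      simp [Ring.lie_def, Matrix.mul_fin_three, Matrix.smul_apply] <;> ring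
  refine ⟨hw1, ?_⟩
  rw [hw1]
  intro h
  rw [Submodule.mem_span_insert] at h
  obtain ⟨r, y, hy, hx⟩ := h
  rw [Submodule.mem_span_insert] at hy
  obtain ⟨s, z, hz, hy'⟩ := hy
  rw [Submodule.mem_span_singleton] at hz
  obtain ⟨t, hz'⟩ := hz
  subst hz' hy'
  have e11 := congrFun (congrFun hx 0) 0
  have e22 := congrFun (congrFun hx 1) 1
  have e12 := congrFun (congrFun hx 0) 1
  simp [Ring.lie_def, Matrix.mul_fin_three, Matrix.smul_apply, Matrix.add_apply,
    Complex.real_smul] at e11 e22 e12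
  have h2I : (2 * I : ℂ) ≠ 0 := by simp [Complex.ext_iff]
  have h1 : a * (starRingEnd ℂ) a = b * (starRingEnd ℂ) b := by
    have h : (2 * I) * (a * (starRingEnd ℂ) a) = (2 * I) * (b * (starRingEnd ℂ) b) := by
      linear_combination e11 - e22
    exact mul_left_cancel₀ h2I h
  have hab : a * (starRingEnd ℂ) b = 0 := by
    have h : (2 * I) * (a * (starRingEnd ℂ) b) = (2 * I) * 0 := by linear_combination e12
    exact mul_left_cancel₀ h2I h
  rcases mul_eq_zero.mp hab with ha | hb
  · refine ⟨ha, ?_⟩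
    rw [ha] at h1
    have : b * (starRingEnd ℂ) b = 0 := by linear_combination -h1
    rw [Complex.mul_conj] at this
    exact_mod_cast Complex.normSq_eq_zero.mp (by exact_mod_cast this)
  · have hb0 : b = 0 := by
      have := congrArg (starRingEnd ℂ) hb
      simpa using this
    refine ⟨?_, hb0⟩
    rw [hb0] at h1
    have : a * (starRingEnd ℂ) a = 0 := by simpa using h1
    rw [Complex.mul_conj] at this
    exact_mod_cast Complex.normSq_eq_zero.mp (by exact_mod_cast this)
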